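/- Let $0 < \lambda < 1$, $C_0, C_1 > 0$, and let $\Psi: \mathbb{R}^n \to \mathbb{R}$ satisfy $|\Psi_r(z)| \le \frac{C_0}{r^{n+1}}|z|$ for all $z$ (where $\Psi_r(z) = r^{-n}\Psi(z/r)$) and $|\Psi(z)| \le C_1 |z|^{-(n+2-a)}$ for $|z| > 2$, with $a < 1$. Suppose $f$ is locally integrable on $\mathbb{R}^n$ and $\int_{\mathbb{R}^n}\Psi_r(x-z)\,dz = 0$. Then there is a constant $C$, independent of $f$, $x$, and $r$, such that $\frac{1}{r}\left|\int_{\mathbb{R}^n}(f(z)-f(x))\,\Psi_r(x-z)\,dz\right| \le C\, r^{\lambda - 1}\, M^{\sharp,\lambda}f(x)$, where $M^{\sharp,\lambda}f(x) = \sup_{B \ni x} |B|^{-1-\lambda/n}\int_B |f(y)-f(x)|\,dy$ (supremum over all balls of $\mathbb{R}^n$ containing $x$), whenever the left side is finite. -/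

import Mathlib

open MeasureTheory Set ENNReal

/-- The sharp Calderón maximal operator
`M^{♯,λ}f(x) = sup_{B ∋ x} |B|^{-1-λ/n} ∫_B |f(y) - f(x)| dy`, supremum over all
Euclidean balls of `ℝⁿ` containing `x`. -/
noncomputable def sharpCalderonMaximal (n : ℕ) (lam : ℝ)
    (f : EuclideanSpace ℝ (Fin n) → ℝ) (x : EuclideanSpace ℝ (Fin n)) : ℝ≥0∞ :=
  ⨆ (c : EuclideanSpace ℝ (Fin n)) (ρ : ℝ) (_ : 0 < ρ) (_ : x ∈ Metric.ball c ρ),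
    (volume (Metric.ball c ρ)) ^ (-(1 + lam / n)) *
      ∫⁻ w in Metric.ball c ρ, ENNReal.ofReal |f w - f x|

private lemma dyadic_loc (u : ℝ) (hu : 1 < u) : ∃ j : ℕ, (2:ℝ)^j < u ∧ u ≤ 2^(j+1) := by
  obtain ⟨m, h1, h2⟩ := exists_nat_pow_near hu.le one_lt_two
  rcases h1.eq_or_lt with he | hlt
  · obtain ⟨k, rfl⟩ : ∃ k, m = k + 1 := by
      refine ⟨m - 1, ?_⟩
      rcases Nat.eq_zero_or_pos m with rfl | hm
      · exfalso; rw [pow_zero] at he; linarith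
      · omega
    exact ⟨k, by rw [← he]; exact pow_lt_pow_right₀ one_lt_two (Nat.lt_succ_self k), he.ge⟩
  · exact ⟨m, hlt, h2.le⟩


private lemma annulus_coeff (n : ℕ) (lam a C1 r : ℝ) (hr : 0 < r) (j : ℕ) :
    C1 * r ^ (-(n:ℝ)) * ((2:ℝ) ^ ((j:ℝ)+1)) ^ (-((n:ℝ)+2-a)) *
      (((2:ℝ) ^ ((j:ℝ) + 2) * (2*r)) ^ ((n:ℝ)+lam)) =
    (C1 * 2 ^ (3*((n:ℝ)+lam) - ((n:ℝ)+2-a)) * ((2:ℝ) ^ (lam - 2 + a)) ^ j) * r ^ lam := by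
  have h2 : (0:ℝ) < 2 := two_pos
  rw [Real.mul_rpow (Real.rpow_pos_of_pos h2 _).le (by positivity),
    Real.mul_rpow h2.le hr.le,
    ← Real.rpow_natCast ((2:ℝ) ^ (lam - 2 + a)) j,
    ← Real.rpow_mul h2.le, ← Real.rpow_mul h2.le, ← Real.rpow_mul h2.le]
  rw [show C1 * r ^ (-(n:ℝ)) * 2 ^ (((j:ℝ)+1) * (-((n:ℝ)+2-a))) *
      (2 ^ (((j:ℝ)+2) * ((n:ℝ)+lam)) * ((2:ℝ) ^ ((n:ℝ)+lam) * r ^ ((n:ℝ)+lam))) =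
    C1 * (2 ^ (((j:ℝ)+1) * (-((n:ℝ)+2-a))) * 2 ^ (((j:ℝ)+2) * ((n:ℝ)+lam)) *
      2 ^ ((n:ℝ)+lam)) * (r ^ (-(n:ℝ)) * r ^ ((n:ℝ)+lam)) by ring]
  rw [← Real.rpow_add h2, ← Real.rpow_add h2, ← Real.rpow_add hr,
    show C1 * 2 ^ (3*((n:ℝ)+lam) - ((n:ℝ)+2-a)) * 2 ^ ((lam - 2 + a) * (j:ℝ)) * r ^ lam =
      C1 * (2 ^ (3*((n:ℝ)+lam) - ((n:ℝ)+2-a)) * 2 ^ ((lam - 2 + a) * (j:ℝ))) * r ^ lam by ring,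
    ← Real.rpow_add h2]
  congr 2
  · ring
  · ring


/-- the core dyadic estimate: if `Ψ_r(z) = r^{-n}Ψ(z/r)` satisfies the
linear bound `|Ψ_r(z)| ≤ (C₀/r^{n+1})|z|` and the decay `|Ψ(z)| ≤ C₁|z|^{-(n+2-a)}`
for `|z| > 2` (with `a < 1`), and `∫ Ψ_r(x-z) dz = 0`, then
`(1/r)|∫ (f(z)-f(x)) Ψ_r(x-z) dz| ≤ C r^{λ-1} M^{♯,λ}f(x)` whenever the left-hand
integral converges. -/
theorem core_dyadic_estimate (n : ℕ) (lam a C0 C1 : ℝ)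
    (hlam : lam ∈ Set.Ioo (0 : ℝ) 1) (hC0 : 0 < C0) (hC1 : 0 < C1) (ha : a < 1)
    (Ψ : EuclideanSpace ℝ (Fin n) → ℝ)
    (hΨ1 : ∀ r : ℝ, 0 < r → ∀ z : EuclideanSpace ℝ (Fin n),
      |r ^ (-(n : ℝ)) * Ψ (r⁻¹ • z)| ≤ C0 / r ^ ((n : ℝ) + 1) * ‖z‖)
    (hΨ2 : ∀ z : EuclideanSpace ℝ (Fin n), 2 < ‖z‖ →
      |Ψ z| ≤ C1 * ‖z‖ ^ (-((n : ℝ) + 2 - a))) :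
    ∃ C : ℝ, 0 < C ∧ ∀ f : EuclideanSpace ℝ (Fin n) → ℝ,
      LocallyIntegrable f volume → ∀ (x : EuclideanSpace ℝ (Fin n)) (r : ℝ), 0 < r →
      (∫ z : EuclideanSpace ℝ (Fin n), r ^ (-(n : ℝ)) * Ψ (r⁻¹ • (x - z)) = 0) →
      Integrable (fun z : EuclideanSpace ℝ (Fin n) =>
        (f z - f x) * (r ^ (-(n : ℝ)) * Ψ (r⁻¹ • (x - z)))) →
      ENNReal.ofReal ((1 / r) * |∫ z : EuclideanSpace ℝ (Fin n),
          (f z - f x) * (r ^ (-(n : ℝ)) * Ψ (r⁻¹ • (x - z)))|) ≤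
        ENNReal.ofReal (C * r ^ (lam - 1)) * sharpCalderonMaximal n lam f x := by
  obtain ⟨hlam0, hlam1⟩ := hlam
  rcases Nat.eq_zero_or_pos n with hn | hn
  · -- trivial case n = 0
    subst hn
    refine ⟨1, one_pos, ?_⟩
    intro f hf x r hr h0 hint
    have hzero : ∀ z : EuclideanSpace ℝ (Fin 0),
        (f z - f x) * (r ^ (-(0:ℕ):ℝ) * Ψ (r⁻¹ • (x - z))) = 0 := by
      intro z
      have hzx : z = x := Subsingleton.elim z x
      rw [hzx, sub_self, zero_mul]
    simp only [hzero, integral_zero, abs_zero, mul_zero, ENNReal.ofReal_zero]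
    exact zero_le
  · -- main case n ≥ 1
    have hn' : (0:ℝ) < n := by exact_mod_cast hn
    have hnt : Nontrivial (EuclideanSpace ℝ (Fin n)) := by
      exact ⟨⟨EuclideanSpace.single ⟨0, hn⟩ 1, 0, by
        intro h
        have := congrArg (fun v : EuclideanSpace ℝ (Fin n) => v ⟨0, hn⟩) h
        simp [EuclideanSpace.single] at this⟩⟩
    set v₁ : ℝ≥0∞ := volume (Metric.ball (0 : EuclideanSpace ℝ (Fin n)) 1) with hv₁
    have hv0 : v₁ ≠ 0 := (Metric.measure_ball_pos volume _ one_pos).ne'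
    have hvt : v₁ ≠ ⊤ := measure_ball_lt_top.ne
    set p : ℝ := 1 + lam / n with hpdef
    have hp : 0 < p := by positivity
    set W : ℝ≥0∞ := v₁ ^ p with hWdef
    have hW0 : W ≠ 0 := by
      simp only [hWdef, ne_eq, ENNReal.rpow_eq_zero_iff, not_or, not_and_or]
      exact ⟨Or.inl hv0, Or.inl hvt⟩
    have hWt : W ≠ ⊤ := by
      simp only [hWdef, ne_eq, ENNReal.rpow_eq_top_iff, not_or, not_and_or]
      exact ⟨Or.inl hv0, Or.inl hvt⟩
    set e : ℝ := (n:ℝ) + 2 - a with hedef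
    have he : 0 < e := by simp only [hedef]; linarith
    set q : ℝ := (2:ℝ) ^ (lam - 2 + a) with hqdef
    have hq0 : 0 < q := Real.rpow_pos_of_pos two_pos _
    have hq1 : q < 1 := Real.rpow_lt_one_of_one_lt_of_neg one_lt_two (by linarith)
    set Kin : ℝ := 2 * C0 * 3 ^ ((n:ℝ) + lam) with hKin
    have hKin0 : 0 < Kin := by
      have h3 := Real.rpow_pos_of_pos (by norm_num : (0:ℝ) < 3) ((n:ℝ) + lam)
      positivity
    set Kout : ℝ := C1 * 2 ^ (3*((n:ℝ)+lam) - e) with hKout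
    have hKout0 : 0 < Kout := by
      have h2 := Real.rpow_pos_of_pos two_pos (3*((n:ℝ)+lam) - e)
      positivity
    have hWtr : 0 < W.toReal := ENNReal.toReal_pos hW0 hWt
    set Ctot : ℝ := (Kin + Kout / (1 - q)) * W.toReal with hCtot
    have h1q : 0 < 1 - q := by linarith
    have hCtot0 : 0 < Ctot := by positivity
    -- key ball lemma
    have L1 : ∀ (f : EuclideanSpace ℝ (Fin n) → ℝ) (x c : EuclideanSpace ℝ (Fin n)) (ρ : ℝ),
        0 < ρ → x ∈ Metric.ball c ρ →
        (∫⁻ w in Metric.ball c ρ, ENNReal.ofReal |f w - f x|) ≤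
          ENNReal.ofReal (ρ ^ ((n:ℝ) + lam)) * (W * sharpCalderonMaximal n lam f x) := by
      intro f x c ρ hρ hx
      set I : ℝ≥0∞ := ∫⁻ w in Metric.ball c ρ, ENNReal.ofReal |f w - f x| with hI
      set B : ℝ≥0∞ := volume (Metric.ball c ρ) with hB
      have hB0 : B ≠ 0 := (Metric.measure_ball_pos volume _ hρ).ne'
      have hBt : B ≠ ⊤ := measure_ball_lt_top.ne
      have hsup : B ^ (-p) * I ≤ sharpCalderonMaximal n lam f x := by
        apply le_iSup_of_le c
        apply le_iSup_of_le ρ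
        apply le_iSup_of_le hρ
        apply le_iSup_of_le hx
        exact le_rfl
      have hkey : I ≤ B ^ p * sharpCalderonMaximal n lam f x := by
        have h1 := mul_le_mul_right hsup (B ^ p)
        rwa [← mul_assoc, ← ENNReal.rpow_add _ _ hB0 hBt, add_neg_cancel,
          ENNReal.rpow_zero, one_mul] at h1
      have hvol : B = ENNReal.ofReal (ρ ^ (n:ℕ)) * v₁ := by
        rw [hB, Measure.addHaar_ball volume c hρ.le, finrank_euclideanSpace_fin]
      have hBp : B ^ p = ENNReal.ofReal (ρ ^ ((n:ℝ) + lam)) * W := by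
        rw [hvol, ENNReal.mul_rpow_of_nonneg _ _ hp.le, ENNReal.ofReal_rpow_of_pos (by positivity)]
        congr 2
        rw [← Real.rpow_natCast ρ n, ← Real.rpow_mul hρ.le]
        congr 1
        rw [hpdef]; field_simp
      rw [hBp, mul_assoc] at hkey
      exact hkey
    refine ⟨Ctot, hCtot0, ?_⟩
    intro f hf x r hr hcancel hint
    set g : EuclideanSpace ℝ (Fin n) → ℝ :=
      fun z => (f z - f x) * (r ^ (-(n:ℝ)) * Ψ (r⁻¹ • (x - z))) with hg
    set M : ℝ≥0∞ := sharpCalderonMaximal n lam f x with hM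
    -- Step A
    have stepA : ENNReal.ofReal |∫ z, g z| ≤ ∫⁻ z, ENNReal.ofReal |g z| := by
      calc ENNReal.ofReal |∫ z, g z| ≤ ENNReal.ofReal (∫ z, ‖g z‖) := by
            apply ENNReal.ofReal_le_ofReal
            rw [← Real.norm_eq_abs]
            exact norm_integral_le_integral_norm _
        _ = ∫⁻ z, ‖g z‖ₑ := ofReal_integral_norm_eq_lintegral_enorm hint
        _ = ∫⁻ z, ENNReal.ofReal |g z| := by
            simp only [← ofReal_norm_eq_enorm, Real.norm_eq_abs]
    set s : Set (EuclideanSpace ℝ (Fin n)) := Metric.closedBall x (2*r) with hs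
    have hsplit : (∫⁻ z, ENNReal.ofReal |g z|) =
        (∫⁻ z in s, ENNReal.ofReal |g z|) + ∫⁻ z in sᶜ, ENNReal.ofReal |g z| :=
      (lintegral_add_compl _ measurableSet_closedBall).symm
    have hnormxz : ∀ z : EuclideanSpace ℝ (Fin n), ‖x - z‖ = dist z x := by
      intro z; rw [dist_eq_norm, ← norm_neg]; congr 1; abel
    -- inner estimate
    have inner_est : (∫⁻ z in s, ENNReal.ofReal |g z|) ≤
        ENNReal.ofReal (Kin * r ^ lam) * (W * M) := by
      have hpt : ∀ z ∈ s, ENNReal.ofReal |g z| ≤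
          ENNReal.ofReal (2 * C0 * r ^ (-(n:ℝ))) * ENNReal.ofReal |f z - f x| := by
        intro z hz
        rw [← ENNReal.ofReal_mul (by positivity)]
        apply ENNReal.ofReal_le_ofReal
        have hb := hΨ1 r hr (x - z)
        have hd : ‖x - z‖ ≤ 2 * r := by rw [hnormxz]; exact Metric.mem_closedBall.mp hz
        calc |g z| = |f z - f x| * |r ^ (-(n:ℝ)) * Ψ (r⁻¹ • (x - z))| := abs_mul _ _
          _ ≤ |f z - f x| * (C0 / r ^ ((n:ℝ)+1) * ‖x - z‖) :=
              mul_le_mul_of_nonneg_left hb (abs_nonneg _)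
          _ ≤ |f z - f x| * (C0 / r ^ ((n:ℝ)+1) * (2*r)) := by
              apply mul_le_mul_of_nonneg_left _ (abs_nonneg _)
              apply mul_le_mul_of_nonneg_left hd (by positivity)
          _ = 2 * C0 * r ^ (-(n:ℝ)) * |f z - f x| := by
              rw [Real.rpow_neg hr.le]
              have hrn : r ^ ((n:ℝ)+1) = r ^ (n:ℝ) * r := by
                rw [Real.rpow_add hr, Real.rpow_one]
              rw [hrn]
              have h1 : r ^ (n:ℝ) ≠ 0 := (Real.rpow_pos_of_pos hr _).ne'
              field_simp
      calc (∫⁻ z in s, ENNReal.ofReal |g z|)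
          ≤ ∫⁻ z in s, ENNReal.ofReal (2 * C0 * r ^ (-(n:ℝ))) * ENNReal.ofReal |f z - f x| :=
            lintegral_mono_ae ((ae_restrict_iff' measurableSet_closedBall).2 (ae_of_all _ hpt))
        _ = ENNReal.ofReal (2 * C0 * r ^ (-(n:ℝ))) * ∫⁻ z in s, ENNReal.ofReal |f z - f x| :=
            lintegral_const_mul' _ _ ENNReal.ofReal_ne_top
        _ ≤ ENNReal.ofReal (2 * C0 * r ^ (-(n:ℝ))) *
            ∫⁻ z in Metric.ball x (3*r), ENNReal.ofReal |f z - f x| := by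
            gcongr
            intro z hz
            have := Metric.mem_closedBall.mp hz
            exact Metric.mem_ball.mpr (by linarith)
        _ ≤ ENNReal.ofReal (2 * C0 * r ^ (-(n:ℝ))) *
            (ENNReal.ofReal ((3*r) ^ ((n:ℝ) + lam)) * (W * M)) := by
            gcongr
            exact L1 f x x (3*r) (by positivity) (Metric.mem_ball_self (by positivity))
        _ = ENNReal.ofReal (Kin * r ^ lam) * (W * M) := by
            rw [← mul_assoc, ← ENNReal.ofReal_mul (by positivity)]
            congr 2
            rw [Real.mul_rpow (by norm_num) hr.le, hKin]
            rw [show (2:ℝ) * C0 * r ^ (-(n:ℝ)) * ((3:ℝ) ^ ((n:ℝ)+lam) * r ^ ((n:ℝ)+lam)) =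
              2 * C0 * 3 ^ ((n:ℝ)+lam) * (r ^ (-(n:ℝ)) * r ^ ((n:ℝ)+lam)) by ring]
            rw [← Real.rpow_add hr]
            congr 1
            ring
    -- annuli
    set A : ℕ → Set (EuclideanSpace ℝ (Fin n)) := fun j =>
      Metric.closedBall x (2^(j+1) * (2*r)) \ Metric.closedBall x (2^j * (2*r)) with hA
    have hcover : sᶜ ⊆ ⋃ j, A j := by
      intro z hz
      have hd : 2*r < dist z x := by
        by_contra h
        exact hz (Metric.mem_closedBall.mpr (by linarith))
      have hu : 1 < dist z x / (2*r) := (one_lt_div (by positivity)).mpr hd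
      obtain ⟨j, hj1, hj2⟩ := dyadic_loc _ hu
      refine mem_iUnion.mpr ⟨j, ?_, ?_⟩
      · exact Metric.mem_closedBall.mpr (by
          rw [div_le_iff₀ (by positivity)] at hj2
          linarith)
      · intro hmem
        have := Metric.mem_closedBall.mp hmem
        rw [lt_div_iff₀ (by positivity)] at hj1
        linarith
    have hAj : ∀ j : ℕ, (∫⁻ z in A j, ENNReal.ofReal |g z|) ≤
        ENNReal.ofReal ((Kout * q ^ j) * r ^ lam) * (W * M) := by
      intro j
      set b : ℝ := (2:ℝ) ^ ((j:ℝ) + 1) with hb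
      have hb0 : 0 < b := Real.rpow_pos_of_pos two_pos _
      have hbeq : (2:ℝ)^j * 2 = b := by
        rw [hb, Real.rpow_add two_pos, Real.rpow_one, Real.rpow_natCast]
      have hpt : ∀ z ∈ A j, ENNReal.ofReal |g z| ≤
          ENNReal.ofReal (C1 * r ^ (-(n:ℝ)) * b ^ (-e)) * ENNReal.ofReal |f z - f x| := by
        intro z hz
        obtain ⟨hz1, hz2⟩ := hz
        have hdl : 2^j * (2*r) < dist z x := by
          by_contra h
          exact hz2 (Metric.mem_closedBall.mpr (by linarith))
        set u : ℝ := dist z x / r with hu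
        have hub : b < u := by
          rw [hu, lt_div_iff₀ hr]
          calc b * r = 2^j * (2*r) := by rw [← hbeq]; ring
            _ < dist z x := hdl
        have hu2 : 2 < u := by
          have h1b : 2 ≤ b := by
            rw [← hbeq]
            have : (1:ℝ) ≤ 2^j := one_le_pow₀ one_le_two
            linarith
          linarith
        have hnorm : ‖r⁻¹ • (x - z)‖ = u := by
          rw [norm_smul, Real.norm_eq_abs, abs_of_pos (inv_pos.mpr hr), hnormxz, hu]
          ring
        have hΨb := hΨ2 (r⁻¹ • (x - z)) (by rw [hnorm]; exact hu2)
        rw [hnorm] at hΨb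
        rw [← ENNReal.ofReal_mul (by positivity)]
        apply ENNReal.ofReal_le_ofReal
        have hrn : (0:ℝ) < r ^ (-(n:ℝ)) := Real.rpow_pos_of_pos hr _
        calc |g z| = |f z - f x| * |r ^ (-(n:ℝ)) * Ψ (r⁻¹ • (x - z))| := abs_mul _ _
          _ = |f z - f x| * (r ^ (-(n:ℝ)) * |Ψ (r⁻¹ • (x - z))|) := by
              rw [abs_mul, abs_of_pos hrn]
          _ ≤ |f z - f x| * (r ^ (-(n:ℝ)) * (C1 * u ^ (-e))) := by
              apply mul_le_mul_of_nonneg_left _ (abs_nonneg _)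
              exact mul_le_mul_of_nonneg_left hΨb hrn.le
          _ ≤ |f z - f x| * (r ^ (-(n:ℝ)) * (C1 * b ^ (-e))) := by
              apply mul_le_mul_of_nonneg_left _ (abs_nonneg _)
              apply mul_le_mul_of_nonneg_left _ hrn.le
              apply mul_le_mul_of_nonneg_left _ hC1.le
              exact Real.rpow_le_rpow_of_nonpos hb0 hub.le (by linarith)
          _ = C1 * r ^ (-(n:ℝ)) * b ^ (-e) * |f z - f x| := by ring
      set ρj : ℝ := (2:ℝ) ^ ((j:ℝ) + 2) * (2*r) with hρj
      have hρj0 : 0 < ρj := by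
        have := Real.rpow_pos_of_pos two_pos ((j:ℝ) + 2)
        positivity
      have hsub : A j ⊆ Metric.ball x ρj := by
        intro z hz
        have h1 := Metric.mem_closedBall.mp hz.1
        apply Metric.mem_ball.mpr
        calc dist z x ≤ 2^(j+1) * (2*r) := h1
          _ < ρj := by
            rw [hρj]
            have h2 : ((2:ℝ))^(j+1) = (2:ℝ) ^ ((j:ℝ)+1) := by
              rw [← Real.rpow_natCast]
              norm_num
            rw [h2]
            have h3 : (2:ℝ) ^ ((j:ℝ)+1) < 2 ^ ((j:ℝ)+2) :=
              Real.rpow_lt_rpow_of_exponent_lt one_lt_two (by linarith)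
            have h4 : (0:ℝ) < 2*r := by positivity
            exact mul_lt_mul_of_pos_right h3 h4
      have hAmeas : MeasurableSet (A j) :=
        measurableSet_closedBall.diff measurableSet_closedBall
      calc (∫⁻ z in A j, ENNReal.ofReal |g z|)
          ≤ ∫⁻ z in A j, ENNReal.ofReal (C1 * r ^ (-(n:ℝ)) * b ^ (-e)) *
              ENNReal.ofReal |f z - f x| :=
            lintegral_mono_ae ((ae_restrict_iff' hAmeas).2 (ae_of_all _ hpt))
        _ = ENNReal.ofReal (C1 * r ^ (-(n:ℝ)) * b ^ (-e)) *
              ∫⁻ z in A j, ENNReal.ofReal |f z - f x| :=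
            lintegral_const_mul' _ _ ENNReal.ofReal_ne_top
        _ ≤ ENNReal.ofReal (C1 * r ^ (-(n:ℝ)) * b ^ (-e)) *
              ∫⁻ z in Metric.ball x ρj, ENNReal.ofReal |f z - f x| := by
            gcongr
        _ ≤ ENNReal.ofReal (C1 * r ^ (-(n:ℝ)) * b ^ (-e)) *
              (ENNReal.ofReal (ρj ^ ((n:ℝ) + lam)) * (W * M)) := by
            gcongr
            exact L1 f x x ρj hρj0 (Metric.mem_ball_self hρj0)
        _ = ENNReal.ofReal ((Kout * q ^ j) * r ^ lam) * (W * M) := by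
            rw [← mul_assoc, ← ENNReal.ofReal_mul (by positivity)]
            congr 2
            rw [hb, hρj, hqdef, hKout, hedef]
            exact annulus_coeff n lam a C1 r hr j
    have outer_est : (∫⁻ z in sᶜ, ENNReal.ofReal |g z|) ≤
        ENNReal.ofReal ((Kout / (1 - q)) * r ^ lam) * (W * M) := by
      calc (∫⁻ z in sᶜ, ENNReal.ofReal |g z|)
          ≤ ∫⁻ z in ⋃ j, A j, ENNReal.ofReal |g z| := lintegral_mono_set hcover
        _ ≤ ∑' j, ∫⁻ z in A j, ENNReal.ofReal |g z| := lintegral_iUnion_le _ _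
        _ ≤ ∑' j, ENNReal.ofReal ((Kout * q ^ j) * r ^ lam) * (W * M) :=
            ENNReal.tsum_le_tsum hAj
        _ = (∑' j, ENNReal.ofReal ((Kout * q ^ j) * r ^ lam)) * (W * M) :=
            ENNReal.tsum_mul_right
        _ = ENNReal.ofReal ((Kout / (1 - q)) * r ^ lam) * (W * M) := by
            congr 1
            have hsummable : Summable (fun j : ℕ => (Kout * q ^ j) * r ^ lam) := by
              apply Summable.mul_right
              exact (summable_geometric_of_lt_one hq0.le hq1).mul_left _
            rw [← ENNReal.ofReal_tsum_of_nonneg (fun j => by positivity) hsummable]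
            congr 1
            calc ∑' j : ℕ, (Kout * q ^ j) * r ^ lam
                = (Kout * r ^ lam) * ∑' j : ℕ, q ^ j := by
                  rw [← tsum_mul_left]
                  congr 1; ext j; ring
              _ = (Kout / (1 - q)) * r ^ lam := by
                  rw [tsum_geometric_of_lt_one hq0.le hq1]
                  field_simp
    -- assemble
    calc ENNReal.ofReal ((1/r) * |∫ z, g z|)
        = ENNReal.ofReal (1/r) * ENNReal.ofReal |∫ z, g z| := ENNReal.ofReal_mul (by positivity)
      _ ≤ ENNReal.ofReal (1/r) *
          ((ENNReal.ofReal (Kin * r ^ lam) + ENNReal.ofReal ((Kout / (1 - q)) * r ^ lam)) *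
            (W * M)) := by
          gcongr
          rw [add_mul]
          calc ENNReal.ofReal |∫ z, g z| ≤ ∫⁻ z, ENNReal.ofReal |g z| := stepA
            _ = _ := hsplit
            _ ≤ _ := add_le_add inner_est outer_est
      _ = ENNReal.ofReal (Ctot * r ^ (lam - 1)) * M := by
          rw [← ENNReal.ofReal_add (by positivity) (by positivity)]
          rw [show Kin * r ^ lam + Kout / (1 - q) * r ^ lam =
            (Kin + Kout / (1 - q)) * r ^ lam by ring]
          rw [show W * M = ENNReal.ofReal W.toReal * M by rw [ENNReal.ofReal_toReal hWt]]
          rw [← mul_assoc, ← mul_assoc, ← ENNReal.ofReal_mul (by positivity),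
            ← ENNReal.ofReal_mul (by positivity)]
          congr 2
          rw [hCtot, Real.rpow_sub hr, Real.rpow_one]
          field_simp
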